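/- For every positive integer n, f(n) = ∑_{d=1}^{n} μ(d)·(2^{⌊n/d⌋} − 1), where μ is the Möbius function and ⌊·⌋ is the floor function. -/

import Mathlib

/-- `f n` is the number of nonempty relatively prime subsets of `{1, ..., n}`. -/
def f (n : ℕ) : ℕ :=
  ((Finset.Icc 1 n).powerset.filter fun A => A.Nonempty ∧ A.gcd _root_.id = 1).card

open Finset ArithmeticFunction

lemma sum_moebius_divisors (m : ℕ) :
    (∑ d ∈ m.divisors, (moebius d : ℤ)) = if m = 1 then 1 else 0 := by
  have := ArithmeticFunction.coe_mul_zeta_apply (f := (moebius : ArithmeticFunction ℤ)) (x := m)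
  rw [ArithmeticFunction.moebius_mul_coe_zeta] at this
  rw [← this, ArithmeticFunction.one_apply]

/-- Nathanson: `f(n) = ∑_{d ≤ n} μ(d) (2^{⌊n/d⌋} - 1)`. -/
theorem f_formula (n : ℕ) (hn : 0 < n) :
    (f n : ℤ) = ∑ d ∈ Finset.Icc 1 n,
      (ArithmeticFunction.moebius d) * (2 ^ (n / d) - 1) := by
  classical
  have hIcc : Finset.Icc 1 n = Finset.Ioc 0 n := rfl
  -- Step 1: 2^(n/d) - 1 counts nonempty subsets with d dividing the gcd
  have card_step : ∀ d ∈ Finset.Icc 1 n,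
      (moebius d : ℤ) * (2 ^ (n / d) - 1 : ℤ) =
      ∑ A ∈ (Finset.Icc 1 n).powerset,
        (if A.Nonempty ∧ d ∣ A.gcd _root_.id then (moebius d : ℤ) else 0) := by
    intro d hd
    rw [← Finset.sum_filter]
    have h1 : ((Finset.Icc 1 n).powerset.filter fun A => A.Nonempty ∧ d ∣ A.gcd _root_.id)
        = ((Finset.Icc 1 n).filter (d ∣ ·)).powerset.filter (·.Nonempty) := by
      ext A
      simp only [mem_filter, mem_powerset, Finset.subset_iff, mem_filter]
      constructor
      · rintro ⟨hsub, hne, hdvd⟩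
        exact ⟨fun {a} ha => ⟨hsub ha, hdvd.trans (Finset.gcd_dvd ha)⟩, hne⟩
      · rintro ⟨hsub, hne⟩
        exact ⟨fun {a} ha => (hsub ha).1, hne, Finset.dvd_gcd fun a ha => (hsub ha).2⟩
    rw [h1, Finset.sum_const]
    have hcard : ((Finset.Icc 1 n).filter (d ∣ ·)).card = n / d := by
      rw [hIcc]
      exact Nat.Ioc_filter_dvd_card_eq_div n d
    have h2 : (((Finset.Icc 1 n).filter (d ∣ ·)).powerset.filter (·.Nonempty))
        = ((Finset.Icc 1 n).filter (d ∣ ·)).powerset.erase ∅ := by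
      ext A
      simp [Finset.nonempty_iff_ne_empty, and_comm]
    rw [h2, Finset.card_erase_of_mem (Finset.empty_mem_powerset _),
      Finset.card_powerset, hcard]
    have hpos : 1 ≤ 2 ^ (n / d) := Nat.one_le_two_pow
    rw [nsmul_eq_mul, Nat.cast_sub hpos]
    push_cast
    ring
  rw [Finset.sum_congr rfl card_step, Finset.sum_comm]
  -- Step 2: inner sum over d
  have inner : ∀ A ∈ (Finset.Icc 1 n).powerset,
      (∑ d ∈ Finset.Icc 1 n, if A.Nonempty ∧ d ∣ A.gcd _root_.id then (moebius d : ℤ) else 0)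
      = if A.Nonempty ∧ A.gcd _root_.id = 1 then 1 else 0 := by
    intro A hA
    rw [mem_powerset] at hA
    by_cases hne : A.Nonempty
    · obtain ⟨a, ha⟩ := hne
      have ha' := hA ha
      rw [mem_Icc] at ha'
      have hgpos : 0 < A.gcd _root_.id := Nat.pos_of_ne_zero fun h => by
        have := Finset.gcd_eq_zero_iff.mp h a ha
        simp only [_root_.id] at this
        omega
      have hgle : A.gcd _root_.id ≤ n :=
        le_trans (Nat.le_of_dvd (by show 0 < a; omega) (Finset.gcd_dvd ha)) ha'.2
      have hfilt : (Finset.Icc 1 n).filter (· ∣ A.gcd _root_.id) = (A.gcd _root_.id).divisors := by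
        ext d
        simp only [mem_filter, mem_Icc, Nat.mem_divisors]
        constructor
        · rintro ⟨⟨h1, h2⟩, h3⟩; exact ⟨h3, by omega⟩
        · rintro ⟨h1, h2⟩
          have hd0 : 0 < d := Nat.pos_of_dvd_of_pos h1 hgpos
          exact ⟨⟨hd0, le_trans (Nat.le_of_dvd hgpos h1) hgle⟩, h1⟩
      have hne' : A.Nonempty := ⟨a, ha⟩
      simp only [hne', true_and]
      rw [← Finset.sum_filter, hfilt, sum_moebius_divisors]
    · simp [hne]
  rw [Finset.sum_congr rfl inner, Finset.sum_boole]
  rfl
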